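/- Let n ≥ 1 be an integer, let Ω ⊂ ℝ^{n+1} be a bounded measurable set, let p > n+1 be real, and let u : ℝ^{n+1} → ℝ be measurable with ∫_Ω |u|^p dV < ∞. Then: (1) for every x ∈ ℝ^{n+1} the function y ↦ ‖y − x‖^{−n}·|u(y)| is integrable over Ω, so that Tu(x) = ∫_Ω ((y − x)/‖y − x‖^{n+1})·u(y) dV(y) is well defined for every x ∈ ℝ^{n+1}; and (2) Tu(x) → 0 as ‖x‖ → ∞ (i.e., Tu tends to 0 along the cobounded filter). -/

import Mathlib

open MeasureTheory
open Real Set Filter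

private lemma kernel_int_aux (n : ℕ) (s R : ℝ) (hs0 : 0 < s) (hs : s < (n : ℝ) + 1) :
    IntegrableOn (fun y : EuclideanSpace ℝ (Fin (n + 1)) => ‖y‖ ^ (-s))
      (Metric.closedBall 0 R) volume := by
  set E := EuclideanSpace ℝ (Fin (n + 1))
  have hd : (Module.finrank ℝ E : ℝ) = (n : ℝ) + 1 := by
    simp [E, finrank_euclideanSpace]
  have hmeas : Measurable fun y : E => ‖y‖ ^ (-s) := by fun_prop
  have hnonneg : ∀ y : E, 0 ≤ ‖y‖ ^ (-s) := fun y => rpow_nonneg (norm_nonneg y) _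
  refine ⟨hmeas.aestronglyMeasurable, ?_⟩
  rw [HasFiniteIntegral, lintegral_enorm_of_nonneg hnonneg]
  set μ := volume.restrict (Metric.closedBall (0 : E) R)
  have hμfin : μ univ < ⊤ := by
    simpa [μ, Measure.restrict_apply_univ] using
      (Metric.isBounded_closedBall (x := (0:E)) (r := R)).measure_lt_top
  rw [lintegral_eq_lintegral_meas_le μ (Filter.Eventually.of_forall hnonneg)
    hmeas.aemeasurable]
  have hsub : ∀ t : ℝ, 0 < t →
      {a : E | t ≤ ‖a‖ ^ (-s)} ⊆ Metric.closedBall 0 (t ^ (-s)⁻¹) := by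
    intro t ht a ha
    simp only [mem_setOf_eq] at ha
    have hnorm : 0 < ‖a‖ := by
      rcases (norm_nonneg a).lt_or_eq with h | h
      · exact h
      · exfalso
        rw [← h, Real.zero_rpow (by linarith : -s ≠ 0)] at ha
        linarith
    rw [Metric.mem_closedBall, dist_zero_right]
    exact (Real.le_rpow_inv_iff_of_neg hnorm ht (by linarith : -s < 0)).mpr ha
  calc ∫⁻ t in Ioi (0:ℝ), μ {a | t ≤ ‖a‖ ^ (-s)}
      ≤ ∫⁻ t in Ioc (0:ℝ) 1 ∪ Ioi 1, μ {a | t ≤ ‖a‖ ^ (-s)} :=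
        lintegral_mono_set Ioi_subset_Ioc_union_Ioi
    _ ≤ (∫⁻ t in Ioc (0:ℝ) 1, μ {a | t ≤ ‖a‖ ^ (-s)}) +
        ∫⁻ t in Ioi (1:ℝ), μ {a | t ≤ ‖a‖ ^ (-s)} := lintegral_union_le _ _ _
    _ < ⊤ := by
        refine ENNReal.add_lt_top.2 ⟨?_, ?_⟩
        · calc (∫⁻ t in Ioc (0:ℝ) 1, μ {a | t ≤ ‖a‖ ^ (-s)})
              ≤ ∫⁻ _ in Ioc (0:ℝ) 1, μ univ := by
                refine setLIntegral_mono' measurableSet_Ioc fun t _ => ?_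
                exact measure_mono (subset_univ _)
            _ = μ univ * volume (Ioc (0:ℝ) 1) := by
                rw [setLIntegral_const]
            _ < ⊤ := by
                apply ENNReal.mul_lt_top hμfin
                simp [Real.volume_Ioc]
        · have hbound : ∀ t ∈ Ioi (1:ℝ), μ {a | t ≤ ‖a‖ ^ (-s)} ≤
              ENNReal.ofReal (t ^ (-s⁻¹ * ((n:ℝ)+1))) * volume (Metric.ball (0:E) 1) := by
            intro t ht
            have ht0 : (0:ℝ) < t := lt_trans one_pos ht
            calc μ {a | t ≤ ‖a‖ ^ (-s)}
                ≤ volume {a : E | t ≤ ‖a‖ ^ (-s)} := Measure.restrict_le_self _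
              _ ≤ volume (Metric.closedBall (0:E) (t ^ (-s)⁻¹)) :=
                  measure_mono (hsub t ht0)
              _ = ENNReal.ofReal ((t ^ (-s)⁻¹) ^ Module.finrank ℝ E) *
                  volume (Metric.ball (0:E) 1) :=
                  Measure.addHaar_closedBall _ _ (rpow_nonneg ht0.le _)
              _ = ENNReal.ofReal (t ^ (-s⁻¹ * ((n:ℝ)+1))) * volume (Metric.ball (0:E) 1) := by
                  congr 1
                  rw [← Real.rpow_natCast (t ^ (-s)⁻¹), ← Real.rpow_mul ht0.le]
                  congr 2
                  rw [hd]
                  ring_nf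
          calc ∫⁻ t in Ioi (1:ℝ), μ {a | t ≤ ‖a‖ ^ (-s)}
              ≤ ∫⁻ t in Ioi (1:ℝ),
                  ENNReal.ofReal (t ^ (-s⁻¹ * ((n:ℝ)+1))) * volume (Metric.ball (0:E) 1) :=
                setLIntegral_mono' measurableSet_Ioi hbound
            _ = (∫⁻ t in Ioi (1:ℝ), ENNReal.ofReal (t ^ (-s⁻¹ * ((n:ℝ)+1)))) *
                  volume (Metric.ball (0:E) 1) := by
                rw [lintegral_mul_const' _ _ measure_ball_lt_top.ne]
            _ < ⊤ := by
                apply ENNReal.mul_lt_top _ measure_ball_lt_top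
                apply IntegrableOn.setLIntegral_lt_top
                apply integrableOn_Ioi_rpow_of_lt _ one_pos
                rw [neg_mul, neg_lt_neg_iff]
                rw [lt_inv_mul_iff₀ hs0, mul_one]  -- 1 < s⁻¹ * (n+1) ↔ s < n+1 ?
                exact hs

private lemma kernel_int (n : ℕ) (x : EuclideanSpace ℝ (Fin (n + 1))) (s R : ℝ)
    (hs0 : 0 < s) (hs : s < (n : ℝ) + 1) :
    IntegrableOn (fun y : EuclideanSpace ℝ (Fin (n + 1)) => ‖y - x‖ ^ (-s))
      (Metric.closedBall x R) volume := by
  have h0 := kernel_int_aux n s R hs0 hs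
  rw [← integrable_indicator_iff measurableSet_closedBall] at h0 ⊢
  have := h0.comp_sub_right x
  convert this using 1
  · rfl
  ext y
  by_cases hy : y ∈ Metric.closedBall x R
  · have hy' : y - x ∈ Metric.closedBall (0 : EuclideanSpace ℝ (Fin (n+1))) R := by
      simpa [Metric.mem_closedBall, dist_eq_norm] using hy
    simp [indicator_of_mem hy, indicator_of_mem hy']
  · have hy' : y - x ∉ Metric.closedBall (0 : EuclideanSpace ℝ (Fin (n+1))) R := by
      simpa [Metric.mem_closedBall, dist_eq_norm] using hy
    simp [indicator_of_notMem hy, indicator_of_notMem hy']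

private lemma teo_part1
    (n : ℕ) (hn : 1 ≤ n)
    (Ω : Set (EuclideanSpace ℝ (Fin (n + 1))))
    (hΩm : MeasurableSet Ω) (hΩb : Bornology.IsBounded Ω)
    (p : ℝ) (hp : (n : ℝ) + 1 < p)
    (u : EuclideanSpace ℝ (Fin (n + 1)) → ℝ) (hu : Measurable u)
    (hLp : IntegrableOn (fun z => |u z| ^ p) Ω volume)
    (kernel_int : ∀ (x : EuclideanSpace ℝ (Fin (n + 1))) (s R : ℝ),
      0 < s → s < (n : ℝ) + 1 →
      IntegrableOn (fun y : EuclideanSpace ℝ (Fin (n + 1)) => ‖y - x‖ ^ (-s))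
        (Metric.closedBall x R) volume) :
    ∀ x : EuclideanSpace ℝ (Fin (n + 1)),
      IntegrableOn (fun y => |u y| / ‖y - x‖ ^ n) Ω volume := by
  have hp1 : 1 < p := by
    have : (0:ℝ) ≤ (n:ℝ) := Nat.cast_nonneg n
    linarith
  set q : ℝ := p / (p - 1) with hq_def
  have hpq : p.HolderConjugate q := by
    have := Real.HolderConjugate.conjExponent hp1
    simpa [Real.conjExponent, hq_def] using this
  have hq1 : 1 < q := hpq.symm.lt
  have hnq0 : 0 < (n : ℝ) * q := by positivity
  have hnq : (n : ℝ) * q < (n : ℝ) + 1 := by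
    rw [hq_def, ← mul_div_assoc, div_lt_iff₀ (by linarith : (0:ℝ) < p - 1)]
    nlinarith
  intro x
  obtain ⟨R, hR⟩ := hΩb.subset_closedBall x
  have hker : IntegrableOn (fun y => ‖y - x‖ ^ (-((n:ℝ) * q))) Ω volume :=
    (kernel_int x ((n:ℝ) * q) R hnq0 hnq).mono_set hR
  refine Integrable.mono' (hLp.add hker) ?_ ?_
  · apply Measurable.aestronglyMeasurable
    fun_prop
  · refine Filter.Eventually.of_forall fun y => ?_
    have hfnn : 0 ≤ |u y| / ‖y - x‖ ^ n := by positivity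
    rw [Real.norm_eq_abs, abs_of_nonneg hfnn]
    simp only [Pi.add_apply]
    rcases eq_or_lt_of_le (norm_nonneg (y - x)) with ht0 | ht0
    · rw [← ht0, zero_pow (by omega : n ≠ 0), div_zero,
        Real.zero_rpow (by linarith : -((n:ℝ) * q) ≠ 0)]
      positivity
    · set t := ‖y - x‖
      have h1 : |u y| / t ^ n = |u y| * t ^ (-(n:ℝ)) := by
        rw [Real.rpow_neg ht0.le, Real.rpow_natCast, div_eq_mul_inv]
      rw [h1]
      have h2 := Real.young_inequality (|u y|) (t ^ (-(n:ℝ))) hpq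
      have h3 : |t ^ (-(n:ℝ))| = t ^ (-(n:ℝ)) := abs_of_nonneg (rpow_nonneg ht0.le _)
      rw [abs_abs, h3] at h2
      have h4 : (t ^ (-(n:ℝ))) ^ q = t ^ (-((n:ℝ) * q)) := by
        rw [← Real.rpow_mul ht0.le, neg_mul]
      rw [h4] at h2
      have h5 : |u y| ^ p / p ≤ |u y| ^ p := div_le_self (by positivity) hp1.le
      have h6 : t ^ (-((n:ℝ) * q)) / q ≤ t ^ (-((n:ℝ) * q)) :=
        div_le_self (rpow_nonneg ht0.le _) hq1.le
      linarith

private lemma teo_part2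
    (n : ℕ) (hn : 1 ≤ n)
    (Ω : Set (EuclideanSpace ℝ (Fin (n + 1))))
    (hΩm : MeasurableSet Ω) (hΩb : Bornology.IsBounded Ω)
    (p : ℝ) (hp : (n : ℝ) + 1 < p)
    (u : EuclideanSpace ℝ (Fin (n + 1)) → ℝ) (hu : Measurable u)
    (hLp : IntegrableOn (fun z => |u z| ^ p) Ω volume) :
    Filter.Tendsto
      (fun x : EuclideanSpace ℝ (Fin (n + 1)) =>
        ∫ y in Ω, (u y / ‖y - x‖ ^ (n + 1)) • (y - x))
      (Bornology.cobounded (EuclideanSpace ℝ (Fin (n + 1)))) (nhds 0) := by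
  have hp1 : 1 < p := by
    have : (0:ℝ) ≤ (n:ℝ) := Nat.cast_nonneg n
    linarith
  -- |u| is integrable on Ω
  have hI1 : IntegrableOn (fun y => |u y|) Ω volume := by
    have hg : IntegrableOn (fun y => |u y| ^ p + 1) Ω volume :=
      hLp.add (integrableOn_const hΩb.measure_lt_top.ne)
    refine Integrable.mono' hg (hu.abs.aestronglyMeasurable) ?_
    refine Filter.Eventually.of_forall fun y => ?_
    simp only [Pi.add_apply, Real.norm_eq_abs, abs_abs]
    rcases le_or_gt (|u y|) 1 with h | h
    · have : (0:ℝ) ≤ |u y| ^ p := by positivity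
      linarith
    · have h3 : |u y| ≤ |u y| ^ p := by
        nth_rewrite 1 [← Real.rpow_one (|u y|)]
        exact Real.rpow_le_rpow_of_exponent_le h.le hp1.le
      linarith
  set C := ∫ y in Ω, |u y| with hC
  have hC0 : 0 ≤ C := setIntegral_nonneg hΩm fun y _ => abs_nonneg _
  obtain ⟨R, hR⟩ := hΩb.subset_closedBall 0
  -- the bound tends to zero
  have hbnd : Tendsto (fun x : EuclideanSpace ℝ (Fin (n + 1)) =>
      C * ((‖x‖ - R) ^ n)⁻¹) (Bornology.cobounded _) (nhds 0) := by
    have h1 : Tendsto (fun t : ℝ => (t - R) ^ n) atTop atTop :=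
      (tendsto_pow_atTop (by omega : n ≠ 0)).comp (tendsto_atTop_add_const_right _ (-R) tendsto_id)
    have h2 : Tendsto (fun t : ℝ => C * ((t - R) ^ n)⁻¹) atTop (nhds 0) := by
      simpa using (h1.inv_tendsto_atTop).const_mul C
    exact h2.comp tendsto_norm_cobounded_atTop
  rw [tendsto_zero_iff_norm_tendsto_zero]
  refine squeeze_zero' (Filter.Eventually.of_forall fun x => norm_nonneg _) ?_ hbnd
  filter_upwards [tendsto_norm_cobounded_atTop.eventually_ge_atTop (R + 1)] with x hx
  have hxR : (1:ℝ) ≤ ‖x‖ - R := by linarith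
  have hxR0 : (0:ℝ) < ‖x‖ - R := by linarith
  have key : ‖∫ y in Ω, (u y / ‖y - x‖ ^ (n + 1)) • (y - x)‖ ≤
      ∫ y in Ω, |u y| * ((‖x‖ - R) ^ n)⁻¹ := by
    refine norm_integral_le_of_norm_le (hI1.mul_const _) ?_
    refine (ae_restrict_iff' hΩm).2 (Filter.Eventually.of_forall fun y hy => ?_)
    have hyR : ‖y‖ ≤ R := by simpa [dist_zero_right] using hR hy
    set t := ‖y - x‖ with ht_def
    have ht : ‖x‖ - R ≤ t := by
      have := norm_sub_norm_le x y
      have h' : ‖x - y‖ = t := by rw [ht_def, norm_sub_rev]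
      linarith [norm_sub_norm_le x y, h' ▸ (le_refl ‖x - y‖)]
    have ht0 : 0 < t := lt_of_lt_of_le hxR0 ht
    have hnorm : ‖(u y / t ^ (n + 1)) • (y - x)‖ = |u y| / t ^ (n + 1) * t := by
      rw [norm_smul, Real.norm_eq_abs, abs_div, abs_of_nonneg (by positivity : (0:ℝ) ≤ t ^ (n+1))]
    rw [hnorm]
    have heq : |u y| / t ^ (n + 1) * t = |u y| * (t ^ n)⁻¹ := by
      field_simp
      ring
    rw [heq]
    gcongr
  refine key.trans ?_
  rw [integral_mul_const, mul_comm]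

/-- Existence and decay of the (componentwise, real-density)
Teodorescu transform: if `u ∈ L^p(Ω)` with `p > n+1` and `Ω` bounded, then
(1) the kernel `y ↦ ‖y-x‖^{-n} |u(y)|` is integrable on `Ω` for every `x`,
so `Tu(x) = ∫_Ω ((y-x)/‖y-x‖^{n+1}) u(y) dV(y)` is well defined everywhere,
and (2) `Tu(x) → 0` as `‖x‖ → ∞`. -/
theorem teodorescu_exists_and_decays
    (n : ℕ) (hn : 1 ≤ n)
    (Ω : Set (EuclideanSpace ℝ (Fin (n + 1))))
    (hΩm : MeasurableSet Ω) (hΩb : Bornology.IsBounded Ω)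
    (p : ℝ) (hp : (n : ℝ) + 1 < p)
    (u : EuclideanSpace ℝ (Fin (n + 1)) → ℝ) (hu : Measurable u)
    (hLp : IntegrableOn (fun z => |u z| ^ p) Ω volume) :
    (∀ x : EuclideanSpace ℝ (Fin (n + 1)),
      IntegrableOn (fun y => |u y| / ‖y - x‖ ^ n) Ω volume) ∧
    Filter.Tendsto
      (fun x : EuclideanSpace ℝ (Fin (n + 1)) =>
        ∫ y in Ω, (u y / ‖y - x‖ ^ (n + 1)) • (y - x))
      (Bornology.cobounded (EuclideanSpace ℝ (Fin (n + 1)))) (nhds 0) :=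
  ⟨teo_part1 n hn Ω hΩm hΩb p hp u hu hLp (fun x => kernel_int n x),
   teo_part2 n hn Ω hΩm hΩb p hp u hu hLp⟩
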